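/- Let R be a commutative ring and let (n, k, m, In, Out, B, G_i, a_i, b_i, c_i, d_i) be a braid-strip datum over R. Then the element Π_{u ∈ Out} u − Π_{u ∈ In} u (products over the multisets Out and In with multiplicity) lies in the ideal of R generated by the 2m elements a_i + b_i − c_i − d_i and a_i b_i − c_i d_i for 1 ≤ i ≤ m. (This is the abstract form of Proposition 5.2: for a partial braid graph S with vertex set W, the element N(W) = Π_{e ∈ Out(W)} U_e − Π_{e ∈ In(W)} U_e lies in the ideal L + Q generated by the linear elements L(p) and the quadratic elements Q(p) associated to the crossings.) -/

import Mathlib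

/-- The `l`-th complete homogeneous symmetric polynomial of the elements
`y 0, …, y (m-1)`. -/
noncomputable def hsymm {R : Type*} [CommRing R] {m : ℕ} (y : Fin m → R) (l : ℕ) : R :=
  ∑ t : Sym (Fin m) l, ((t : Multiset (Fin m)).map y).prod

/-- The elementary symmetric polynomials of a finite multiset, indexed by ℤ,
with the convention that `S_k = 0` for `k < 0`. -/
noncomputable def esymmZ {R : Type*} [CommRing R] (s : Multiset R) (k : ℤ) : R :=
  if 0 ≤ k then s.esymm k.toNat else 0

/-- A braid-strip datum over `R`: the combinatorial data extracted from slicing a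
partial braid graph into horizontal strips, one per crossing.  `In` and `Out` are
the multisets of variables on the incoming and outgoing exterior edges (each of
cardinality `n`), `B 0, …, B (k-1)` are the variables on the strands closing the
braid, `G i` is the multiset of variables crossing a horizontal line with the two
edges at the `i`-th crossing removed, and `a i, b i` (resp. `c i, d i`) are the
variables on the edges leaving (resp. entering) the `i`-th crossing.  Setting
`F 0 = In + B` and `F i = G i + {a i, b i}`, we require `F (i-1) = G i + {c i, d i}`
for `1 ≤ i ≤ m` and `F m = Out + B`. -/
structure BraidStripDatum (R : Type*) [CommRing R] where
  n : ℕ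
  k : ℕ
  m : ℕ
  hm : 1 ≤ m
  In : Multiset R
  Out : Multiset R
  hIn : Multiset.card In = n
  hOut : Multiset.card Out = n
  B : Fin k → R
  G : Fin m → Multiset R
  a : Fin m → R
  b : Fin m → R
  c : Fin m → R
  d : Fin m → R
  hfirst : In + ↑(List.ofFn B) =
    c ⟨0, hm⟩ ::ₘ d ⟨0, hm⟩ ::ₘ G ⟨0, hm⟩
  hstep : ∀ i : Fin m, ∀ h : i.val + 1 < m,
    a i ::ₘ b i ::ₘ G i =
      c ⟨i.val + 1, h⟩ ::ₘ d ⟨i.val + 1, h⟩ ::ₘ G ⟨i.val + 1, h⟩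
  hlast : a ⟨m - 1, by omega⟩ ::ₘ b ⟨m - 1, by omega⟩ ::ₘ G ⟨m - 1, by omega⟩ =
    Out + ↑(List.ofFn B)


/-- Proposition 5.2 (abstract form): for a braid-strip datum,
`Π_{e ∈ Out} U_e − Π_{e ∈ In} U_e` lies in the ideal generated by the linear
elements `L(p_i) = a_i + b_i − c_i − d_i` and the quadratic elements
`Q(p_i) = a_i b_i − c_i d_i`. -/
theorem braidStrip_prod_sub_prod_mem_span
    {R : Type*} [CommRing R] (D : BraidStripDatum R) :
    D.Out.prod - D.In.prod ∈
      Ideal.span ((Set.range fun i : Fin D.m => D.a i + D.b i - D.c i - D.d i) ∪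
        (Set.range fun i : Fin D.m => D.a i * D.b i - D.c i * D.d i)) := by
  classical
  set I := Ideal.span ((Set.range fun i : Fin D.m => D.a i + D.b i - D.c i - D.d i) ∪
        (Set.range fun i : Fin D.m => D.a i * D.b i - D.c i * D.d i)) with hI
  set π : R →+* R ⧸ I := Ideal.Quotient.mk I with hπ
  set g : R → PowerSeries (R ⧸ I) :=
    fun r => 1 + PowerSeries.C (R := R ⧸ I) (π r) * PowerSeries.X with hg
  set PS : Multiset R → PowerSeries (R ⧸ I) := fun s => (s.map g).prod with hPS
  -- the two relations, pushed to the quotient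
  have hL : ∀ i : Fin D.m, π (D.a i) + π (D.b i) = π (D.c i) + π (D.d i) := by
    intro i
    have hmem : D.a i + D.b i - D.c i - D.d i ∈ I :=
      Ideal.subset_span (Or.inl ⟨i, rfl⟩)
    have h0 : π (D.a i + D.b i - D.c i - D.d i) = 0 :=
      Ideal.Quotient.eq_zero_iff_mem.mpr hmem
    have h0' : π (D.a i) + π (D.b i) - π (D.c i) - π (D.d i) = 0 := by
      simpa [map_sub, map_add] using h0
    linear_combination h0'
  have hQrel : ∀ i : Fin D.m, π (D.a i) * π (D.b i) = π (D.c i) * π (D.d i) := by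
    intro i
    have hmem : D.a i * D.b i - D.c i * D.d i ∈ I :=
      Ideal.subset_span (Or.inr ⟨i, rfl⟩)
    have h0 : π (D.a i * D.b i - D.c i * D.d i) = 0 :=
      Ideal.Quotient.eq_zero_iff_mem.mpr hmem
    have h0' : π (D.a i) * π (D.b i) - π (D.c i) * π (D.d i) = 0 := by
      simpa [map_sub, map_mul] using h0
    linear_combination h0'
  -- swapping the quadratic factor
  have hq : ∀ i : Fin D.m, g (D.a i) * g (D.b i) = g (D.c i) * g (D.d i) := by
    intro i
    have hs : PowerSeries.C (R := R ⧸ I) (π (D.a i)) + PowerSeries.C (R := R ⧸ I) (π (D.b i))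
        = PowerSeries.C (R := R ⧸ I) (π (D.c i)) + PowerSeries.C (R := R ⧸ I) (π (D.d i)) := by
      rw [← map_add (PowerSeries.C (R := R ⧸ I)), ← map_add (PowerSeries.C (R := R ⧸ I)), hL i]
    have hp : PowerSeries.C (R := R ⧸ I) (π (D.a i)) * PowerSeries.C (R := R ⧸ I) (π (D.b i))
        = PowerSeries.C (R := R ⧸ I) (π (D.c i)) * PowerSeries.C (R := R ⧸ I) (π (D.d i)) := by
      rw [← map_mul (PowerSeries.C (R := R ⧸ I)), ← map_mul (PowerSeries.C (R := R ⧸ I)), hQrel i]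
    simp only [hg]
    linear_combination PowerSeries.X * hs + PowerSeries.X ^ 2 * hp
  have hPScons : ∀ (x : R) (s : Multiset R), PS (x ::ₘ s) = g x * PS s := by
    intro x s; simp [hPS]
  have hPSadd : ∀ s t : Multiset R, PS (s + t) = PS s * PS t := by
    intro s t; simp [hPS]
  -- the chain along the strips
  have chain : ∀ l : ℕ, ∀ hl : l < D.m,
      PS (D.a ⟨l, hl⟩ ::ₘ D.b ⟨l, hl⟩ ::ₘ D.G ⟨l, hl⟩) = PS (D.In + ↑(List.ofFn D.B)) := by
    intro l
    induction l with
    | zero =>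
      intro hl
      rw [D.hfirst, hPScons, hPScons, hPScons, hPScons, ← mul_assoc, ← mul_assoc, hq]
    | succ l ih =>
      intro hl
      have hl' : l < D.m := by omega
      have hstep := D.hstep ⟨l, hl'⟩ hl
      rw [hPScons, hPScons, ← mul_assoc, hq, mul_assoc, ← hPScons, ← hPScons, ← hstep]
      exact ih hl'
  have hfinal : PS (D.Out + ↑(List.ofFn D.B)) = PS (D.In + ↑(List.ofFn D.B)) := by
    have := chain (D.m - 1) (by have := D.hm; omega)
    rwa [D.hlast] at this
  -- cancel the unit PS B
  have hunit : IsUnit (PS ↑(List.ofFn D.B)) := by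
    rw [PowerSeries.isUnit_iff_constantCoeff]
    have hc1 : (PowerSeries.constantCoeff (R := R ⧸ I)) (PS ↑(List.ofFn D.B)) = 1 := by
      simp only [hPS]
      rw [map_multiset_prod]
      apply Multiset.prod_eq_one
      intro x hx
      obtain ⟨y, hy, rfl⟩ := Multiset.mem_map.mp hx
      obtain ⟨r, _, rfl⟩ := Multiset.mem_map.mp hy
      simp [hg]
    rw [hc1]; exact isUnit_one
  have hcancel : PS D.Out = PS D.In := by
    rw [hPSadd, hPSadd] at hfinal
    exact hunit.mul_right_cancel hfinal
  -- coefficient extraction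
  have hcoeff : ∀ s : Multiset R,
      PowerSeries.coeff (R := R ⧸ I) (Multiset.card s) (PS s) = (s.map π).prod := by
    have key : ∀ s : Multiset R,
        (∀ j, Multiset.card s < j → PowerSeries.coeff (R := R ⧸ I) j (PS s) = 0) ∧
        PowerSeries.coeff (R := R ⧸ I) (Multiset.card s) (PS s) = (s.map π).prod := by
      intro s
      induction s using Multiset.induction with
      | empty =>
        constructor
        · intro j hj
          have hj' : j ≠ 0 := by simp at hj; omega
          simp [hPS, PowerSeries.coeff_one, hj']
        · simp [hPS]
      | cons x s ih =>
        have hsplit : PS (x ::ₘ s) =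
            PS s + PowerSeries.C (R := R ⧸ I) (π x) * (PowerSeries.X * PS s) := by
          rw [hPScons]; simp only [hg]; ring
        constructor
        · intro j hj
          rw [Multiset.card_cons] at hj
          obtain ⟨j', rfl⟩ : ∃ j', j = j' + 1 := ⟨j - 1, by omega⟩
          rw [hsplit, map_add, PowerSeries.coeff_C_mul, PowerSeries.coeff_succ_X_mul,
            ih.1 _ (by omega), ih.1 _ (by omega), mul_zero, add_zero]
        · rw [Multiset.card_cons, hsplit, map_add, PowerSeries.coeff_C_mul,
            PowerSeries.coeff_succ_X_mul, ih.1 _ (by omega), ih.2, zero_add,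
            Multiset.map_cons, Multiset.prod_cons]
    exact fun s => (key s).2
  have h1 := hcoeff D.Out
  have h2 := hcoeff D.In
  rw [D.hOut] at h1
  rw [D.hIn] at h2
  rw [hcancel] at h1
  have : (D.Out.map π).prod = (D.In.map π).prod := by rw [← h1, ← h2]
  have hπeq : π D.Out.prod = π D.In.prod := by
    rw [map_multiset_prod, map_multiset_prod, this]
  exact (Ideal.Quotient.eq (I := I)).mp hπeq
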